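/- Gaussian representation of the pure monomer-dimer partition function: for every integer N ≥ 1 and every a ∈ ℝ, Z_N^{(0)}(a) = √(N/(2π)) · ∫_ℝ ((x + e^a)·e^{−x²/2})^N dx. -/

import Mathlib

open MeasureTheory Filter Real

noncomputable section

/-- A dimer configuration on the complete graph `K_N`: a set of non-loop edges
that are pairwise non-incident (a matching). -/
def IsDimerConfig (N : ℕ) (D : Finset (Sym2 (Fin N))) : Prop :=
  (∀ e ∈ D, ¬ e.IsDiag) ∧
  ∀ e ∈ D, ∀ f ∈ D, e ≠ f → ∀ v : Fin N, ¬(v ∈ e ∧ v ∈ f)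

open Classical in
/-- The configuration space `𝒟_N` of all dimer configurations on `K_N`. -/
noncomputable def dimerConfigs (N : ℕ) : Finset (Finset (Sym2 (Fin N))) :=
  Finset.univ.filter (fun D => IsDimerConfig N D)

/-- The number of monomers `S_N(D) = N - 2|D|` (as a real number). -/
def monomerCount (N : ℕ) (D : Finset (Sym2 (Fin N))) : ℝ := (N : ℝ) - 2 * D.card

/-- The monomer density `m_N(D) = S_N(D)/N`. -/
def monomerDensity (N : ℕ) (D : Finset (Sym2 (Fin N))) : ℝ := monomerCount N D / N

/-- `g(h) = (e^h/2)(√(e^{2h}+4) − e^h)`. -/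
def gFun (h : ℝ) : ℝ := Real.exp h / 2 * (Real.sqrt (Real.exp (2*h) + 4) - Real.exp h)

/-- `p⁰(h) = −(1−g(h))/2 − (1/2)·log(1−g(h))`. -/
def p0 (h : ℝ) : ℝ := -(1 - gFun h)/2 - (1/2) * Real.log (1 - gFun h)

/-- Variational pressure `p̃(m) = −Jm² + p⁰((2m−1)J + h)`. -/
def ptilde (h J m : ℝ) : ℝ := -J * m^2 + p0 ((2*m - 1) * J + h)

/-- Pure hard-core partition function `Z_N⁰(a) = Σ_D N^{−|D|} e^{a·S_N(D)}`. -/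
def Z0 (N : ℕ) (a : ℝ) : ℝ :=
  ∑ D ∈ dimerConfigs N, (N : ℝ) ^ (-(D.card : ℤ)) * Real.exp (a * monomerCount N D)

/-- Pure hard-core pressure density `p_N⁰(a) = (1/N) log Z_N⁰(a)`. -/
def p0N (N : ℕ) (a : ℝ) : ℝ := (1 / (N : ℝ)) * Real.log (Z0 N a)

/-- Minus the IMD Hamiltonian: `−H_N(D) = N((h−J)m_N(D) + J m_N(D)²)`. -/
def negH (N : ℕ) (h J : ℝ) (D : Finset (Sym2 (Fin N))) : ℝ :=
  (N : ℝ) * ((h - J) * monomerDensity N D + J * (monomerDensity N D)^2)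

/-- The IMD partition function `Z_N = Σ_D N^{−|D|} e^{−H_N(D)}`. -/
def ZIMD (N : ℕ) (h J : ℝ) : ℝ :=
  ∑ D ∈ dimerConfigs N, (N : ℝ) ^ (-(D.card : ℤ)) * Real.exp (negH N h J D)

/-- The IMD pressure density `p_N = (1/N) log Z_N`. -/
def pIMD (N : ℕ) (h J : ℝ) : ℝ := (1 / (N : ℝ)) * Real.log (ZIMD N h J)

/-- Expectation of an observable `f` under the IMD Gibbs measure `μ_N`. -/
def gibbsExp (N : ℕ) (h J : ℝ) (f : Finset (Sym2 (Fin N)) → ℝ) : ℝ :=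
  (∑ D ∈ dimerConfigs N, (N : ℝ) ^ (-(D.card : ℤ)) * Real.exp (negH N h J D) * f D)
    / ZIMD N h J

/-- `F_N(x) = −Jx² + p_N⁰(2Jx + h − J)`. -/
def FN (h J : ℝ) (N : ℕ) (x : ℝ) : ℝ := -J * x^2 + p0N N (2*J*x + h - J)



section AuxProofs
open Set Topology

noncomputable section

lemma integral_deriv_eq_zero' (f f' : ℝ → ℝ) (hd : ∀ x, HasDerivAt f (f' x) x)
    (hi : Integrable f') (htop : Tendsto f atTop (𝓝 0)) (hbot : Tendsto f atBot (𝓝 0)) :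
    ∫ x, f' x = 0 := by
  have h1 : ∫ x in Iic (0:ℝ), f' x = f 0 - 0 :=
    integral_Iic_of_hasDerivAt_of_tendsto' (fun x _ => hd x) hi.integrableOn hbot
  have h2 : ∫ x in Ioi (0:ℝ), f' x = 0 - f 0 :=
    integral_Ioi_of_hasDerivAt_of_tendsto' (fun x _ => hd x) hi.integrableOn htop
  rw [← intervalIntegral.integral_Iic_add_Ioi (b := (0:ℝ)) hi.integrableOn hi.integrableOn, h1, h2]
  ring

lemma tendsto_pow_gauss (i : ℕ) :
    Tendsto (fun y : ℝ => y ^ i * Real.exp (-(y^2)/2)) atTop (𝓝 0) := by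
  have h1 := Real.tendsto_pow_mul_exp_neg_atTop_nhds_zero i
  have h2 : Tendsto (fun y : ℝ => Real.exp (y - y^2/2)) atTop (𝓝 0) := by
    apply Real.tendsto_exp_atBot.comp
    apply tendsto_atBot_mono (fun y => by nlinarith [sq_nonneg (y - 2)] : ∀ y : ℝ, y - y^2/2 ≤ 2 - y)
    exact (tendsto_atBot_add_const_left atTop 2 tendsto_neg_atTop_atBot).congr (fun y => by ring)
  have := h1.mul h2
  rw [mul_zero] at this
  convert this using 2 with y
  rw [mul_assoc, ← Real.exp_add]
  ring_nf

end
noncomputable section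
lemma tendsto_poly_gauss_atTop (p : Polynomial ℝ) :
    Tendsto (fun y : ℝ => p.eval y * Real.exp (-(y^2)/2)) atTop (𝓝 0) := by
  have : (fun y : ℝ => p.eval y * Real.exp (-(y^2)/2)) =
      fun y => ∑ i ∈ Finset.range (p.natDegree + 1),
        p.coeff i * (y ^ i * Real.exp (-(y^2)/2)) := by
    funext y
    rw [Polynomial.eval_eq_sum_range, Finset.sum_mul]
    simp [mul_assoc]
  rw [this]
  have := tendsto_finset_sum (Finset.range (p.natDegree + 1))
    (fun i _ => (tendsto_pow_gauss i).const_mul (p.coeff i))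
  simpa using this

lemma tendsto_poly_gauss_atBot (p : Polynomial ℝ) :
    Tendsto (fun y : ℝ => p.eval y * Real.exp (-(y^2)/2)) atBot (𝓝 0) := by
  have h := (tendsto_poly_gauss_atTop (p.comp (-Polynomial.X))).comp tendsto_neg_atBot_atTop
  convert h using 2 with y
  simp [Function.comp, neg_pow]

lemma integrable_pow_gauss (i : ℕ) :
    Integrable (fun y : ℝ => y ^ i * Real.exp (-(y^2)/2)) := by
  have h := integrable_rpow_mul_exp_neg_mul_sq (b := 1/2) (by norm_num)
    (s := (i : ℝ)) (lt_of_lt_of_le neg_one_lt_zero (Nat.cast_nonneg i))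
  simp_rw [Real.rpow_natCast] at h
  have e : (fun y : ℝ => y ^ i * Real.exp (-(y^2)/2)) =
      fun y => y ^ i * Real.exp (-(1/2) * y^2) := by
    funext y; ring_nf
  rw [e]; exact h

lemma integrable_poly_gauss (p : Polynomial ℝ) :
    Integrable (fun y : ℝ => p.eval y * Real.exp (-(y^2)/2)) := by
  have : (fun y : ℝ => p.eval y * Real.exp (-(y^2)/2)) =
      fun y => ∑ i ∈ Finset.range (p.natDegree + 1),
        p.coeff i * (y ^ i * Real.exp (-(y^2)/2)) := by
    funext y
    rw [Polynomial.eval_eq_sum_range, Finset.sum_mul]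
    simp [mul_assoc]
  rw [this]
  exact integrable_finset_sum _ (fun i _ => ((integrable_pow_gauss i).const_mul _))
end
noncomputable section
def gInt (n : ℕ) (t : ℝ) : ℝ := ∫ y : ℝ, (1 + t*y)^n * Real.exp (-(y^2)/2)

lemma integrable_gInt (n : ℕ) (t : ℝ) :
    Integrable (fun y : ℝ => (1 + t*y)^n * Real.exp (-(y^2)/2)) := by
  have := integrable_poly_gauss ((1 + Polynomial.C t * Polynomial.X)^n)
  simpa using this

lemma integrable_mulY_gInt (n : ℕ) (t : ℝ) :
    Integrable (fun y : ℝ => y * (1 + t*y)^n * Real.exp (-(y^2)/2)) := by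
  have := integrable_poly_gauss (Polynomial.X * (1 + Polynomial.C t * Polynomial.X)^n)
  simpa using this

lemma gInt_zero (t : ℝ) : gInt 0 t = Real.sqrt (2*π) := by
  have h := integral_gaussian (1/2)
  have e : (fun x : ℝ => Real.exp (-(1/2) * x^2)) = fun x => Real.exp (-(x^2)/2) := by
    funext x; ring_nf
  rw [e] at h
  simp only [gInt, pow_zero, one_mul, h]
  norm_num
  ring

lemma key_ibp (n : ℕ) (t : ℝ) :
    ∫ y : ℝ, y * (1 + t*y)^(n+1) * Real.exp (-(y^2)/2) =
      ((n:ℝ)+1) * t * gInt n t := by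
  set E : ℝ → ℝ := fun y => Real.exp (-(y^2)/2) with hE
  have hEderiv : ∀ y : ℝ, HasDerivAt E (-y * E y) y := by
    intro y
    have h1 : HasDerivAt (fun y : ℝ => -(y^2)/2) (-y) y := by
      have := ((hasDerivAt_pow 2 y).neg).div_const 2
      refine this.congr_deriv ?_
      push_cast; ring
    have := h1.exp
    convert this using 1
    simp [hE]; ring
  have hF : ∀ y : ℝ, HasDerivAt (fun y => (1 + t*y)^(n+1) * E y)
      (((n:ℝ)+1) * t * (1+t*y)^n * E y - y * (1+t*y)^(n+1) * E y) y := by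
    intro y
    have h1 : HasDerivAt (fun y : ℝ => 1 + t*y) t y := by
      simpa using ((hasDerivAt_id y).const_mul t).const_add 1
    have h2 := (h1.pow (n+1)).mul (hEderiv y)
    refine h2.congr_deriv ?_
    push_cast [Pi.pow_apply]
    ring
  have hint : Integrable (fun y : ℝ =>
      ((n:ℝ)+1) * t * (1+t*y)^n * E y - y * (1+t*y)^(n+1) * E y) := by
    apply Integrable.sub
    · simpa [mul_assoc] using ((integrable_gInt n t).const_mul (((n:ℝ)+1)*t))
    · exact integrable_mulY_gInt (n+1) t
  have htop : Tendsto (fun y => (1 + t*y)^(n+1) * E y) atTop (𝓝 0) := by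
    have := tendsto_poly_gauss_atTop ((1 + Polynomial.C t * Polynomial.X)^(n+1))
    simpa [hE] using this
  have hbot : Tendsto (fun y => (1 + t*y)^(n+1) * E y) atBot (𝓝 0) := by
    have := tendsto_poly_gauss_atBot ((1 + Polynomial.C t * Polynomial.X)^(n+1))
    simpa [hE] using this
  have hzero := integral_deriv_eq_zero' _ _ hF hint htop hbot
  rw [integral_sub (by simpa [mul_assoc] using ((integrable_gInt n t).const_mul (((n:ℝ)+1)*t)))
      (integrable_mulY_gInt (n+1) t)] at hzero
  have h3 : ∫ y : ℝ, ((n:ℝ)+1) * t * (1+t*y)^n * E y = ((n:ℝ)+1) * t * gInt n t := by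
    rw [gInt, ← integral_const_mul]
    congr 1; funext y; ring
  linarith [hzero, h3]

lemma integral_y_gauss : ∫ y : ℝ, y * Real.exp (-(y^2)/2) = 0 := by
  have hEd : ∀ y : ℝ, HasDerivAt (fun y : ℝ => -Real.exp (-(y^2)/2))
      (y * Real.exp (-(y^2)/2)) y := by
    intro y
    have h1 : HasDerivAt (fun y : ℝ => -(y^2)/2) (-y) y := by
      have := ((hasDerivAt_pow 2 y).neg).div_const 2
      refine this.congr_deriv ?_
      push_cast; ring
    have := h1.exp.neg
    refine this.congr_deriv ?_
    ring
  have htop : Tendsto (fun y : ℝ => -Real.exp (-(y^2)/2)) atTop (𝓝 0) := by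
    have := (tendsto_poly_gauss_atTop 1).neg
    simpa using this
  have hbot : Tendsto (fun y : ℝ => -Real.exp (-(y^2)/2)) atBot (𝓝 0) := by
    have := (tendsto_poly_gauss_atBot 1).neg
    simpa using this
  have hi : Integrable (fun y : ℝ => y * Real.exp (-(y^2)/2)) := by
    simpa using integrable_pow_gauss 1
  exact integral_deriv_eq_zero' _ _ hEd hi htop hbot

lemma gInt_one (t : ℝ) : gInt 1 t = Real.sqrt (2*π) := by
  have e : (fun y : ℝ => (1 + t*y)^1 * Real.exp (-(y^2)/2)) =
      fun y => Real.exp (-(y^2)/2) + t * (y * Real.exp (-(y^2)/2)) := by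
    funext y; ring
  have h1 : Integrable fun y : ℝ => Real.exp (-(y^2)/2) := by simpa using integrable_gInt 0 t
  have h2 : Integrable fun y : ℝ => t * (y * Real.exp (-(y^2)/2)) := by
    simpa using (integrable_pow_gauss 1).const_mul t
  rw [gInt, e, integral_add h1 h2, integral_const_mul, integral_y_gauss]
  have := gInt_zero t
  simp only [gInt, pow_zero, one_mul] at this
  rw [this]; ring

lemma gInt_rec (n : ℕ) (t : ℝ) :
    gInt (n+2) t = gInt (n+1) t + ((n:ℝ)+1) * t^2 * gInt n t := by
  have e : (fun y : ℝ => (1 + t*y)^(n+2) * Real.exp (-(y^2)/2)) =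
      fun y => (1 + t*y)^(n+1) * Real.exp (-(y^2)/2)
        + t * (y * (1 + t*y)^(n+1) * Real.exp (-(y^2)/2)) := by
    funext y; ring
  have h2 : Integrable fun y : ℝ => t * (y * (1 + t*y)^(n+1) * Real.exp (-(y^2)/2)) := by
    simpa using (integrable_mulY_gInt (n+1) t).const_mul t
  rw [gInt, e, integral_add (integrable_gInt (n+1) t) h2, integral_const_mul, key_ibp n t]
  simp only [gInt]
  ring

end
noncomputable section
def mdAux : ℕ → ℝ → ℝ
  | 0, _ => 1
  | 1, _ => 1
  | (n+2), w => mdAux (n+1) w + ((n:ℝ)+1) * w * mdAux n w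

lemma gInt_eq (n : ℕ) (t : ℝ) : gInt n t = Real.sqrt (2*π) * mdAux n (t^2) := by
  induction n using Nat.strong_induction_on with
  | _ n ih =>
    match n with
    | 0 => simp [gInt_zero, mdAux]
    | 1 => simp [gInt_one, mdAux]
    | (n+2) =>
      rw [gInt_rec, ih (n+1) (by omega), ih n (by omega)]
      show _ = Real.sqrt (2*π) * (mdAux (n+1) (t^2) + ((n:ℝ)+1) * t^2 * mdAux n (t^2))
      ring

lemma rhs_eq (N : ℕ) (hN : 1 ≤ N) (a : ℝ) :
    Real.sqrt ((N : ℝ) / (2 * π)) * ∫ x : ℝ, ((x + Real.exp a) * Real.exp (-x^2/2)) ^ N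
      = Real.exp (a*N) * mdAux N (Real.exp (-(2*a)) / N) := by
  have hNpos : (0:ℝ) < N := by exact_mod_cast hN
  set s := Real.sqrt N with hs
  have hspos : 0 < s := Real.sqrt_pos.mpr hNpos
  have hs2 : s^2 = N := Real.sq_sqrt hNpos.le
  set t := Real.exp (-a) / s with ht
  set G : ℝ → ℝ := fun y => (y + Real.exp a)^N * Real.exp ((N:ℝ) * (-(y^2)/2)) with hG
  have step1 : (fun x : ℝ => ((x + Real.exp a) * Real.exp (-x^2/2))^N) = G := by
    funext x
    rw [hG, mul_pow, ← Real.exp_nat_mul]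
  have step2 : ∫ y : ℝ, G y = s⁻¹ * ∫ x : ℝ, G (s⁻¹ * x) := by
    rw [Measure.integral_comp_inv_mul_left G s, abs_of_pos hspos,
      smul_eq_mul, ← mul_assoc, inv_mul_cancel₀ hspos.ne', one_mul]
  have step3 : ∀ y : ℝ, G (s⁻¹ * y)
      = Real.exp (a*N) * ((1 + t*y)^N * Real.exp (-(y^2)/2)) := by
    intro y
    have hexp : Real.exp a * Real.exp (-a) = 1 := by rw [← Real.exp_add]; simp
    have f1 : s⁻¹ * y + Real.exp a = Real.exp a * (1 + t*y) := by
      have h9 : Real.exp a * (1 + t*y) = Real.exp a + (Real.exp a * Real.exp (-a)) * y / s := by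
        rw [ht]; ring
      rw [h9, hexp]; ring
    have f2 : (N:ℝ) * (-((s⁻¹ * y)^2)/2) = -(y^2)/2 := by
      rw [mul_pow, inv_pow, ← hs2]
      field_simp
    rw [hG]
    simp only
    rw [f1, f2, mul_pow, ← Real.exp_nat_mul, mul_assoc, mul_comm (N:ℝ) a]
  have step4 : ∫ x : ℝ, G (s⁻¹ * x) = Real.exp (a*N) * gInt N t := by
    simp_rw [step3]
    rw [MeasureTheory.integral_const_mul, gInt]
  rw [step1, step2, step4, gInt_eq]
  have ht2 : t^2 = Real.exp (-(2*a)) / N := by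
    rw [ht, div_pow, hs2, sq, ← Real.exp_add]
    ring_nf
  rw [ht2]
  have hcoef : Real.sqrt ((N:ℝ)/(2*π)) = s / Real.sqrt (2*π) := by
    rw [hs, Real.sqrt_div hNpos.le]
  rw [hcoef]
  have h2pi : (0:ℝ) < Real.sqrt (2*π) := Real.sqrt_pos.mpr (by positivity)
  field_simp
end
noncomputable section


open Classical in
def matchOn (N : ℕ) (S : Finset (Fin N)) : Finset (Finset (Sym2 (Fin N))) :=
  Finset.univ.filter (fun D => (∀ e ∈ D, ¬ e.IsDiag) ∧
    (∀ e ∈ D, ∀ g ∈ D, e ≠ g → ∀ v : Fin N, ¬(v ∈ e ∧ v ∈ g)) ∧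
    ∀ e ∈ D, ∀ v : Fin N, v ∈ e → v ∈ S)

lemma mem_matchOn {N : ℕ} {S : Finset (Fin N)} {D : Finset (Sym2 (Fin N))} :
    D ∈ matchOn N S ↔
      (∀ e ∈ D, ¬ e.IsDiag) ∧
      (∀ e ∈ D, ∀ g ∈ D, e ≠ g → ∀ v : Fin N, ¬(v ∈ e ∧ v ∈ g)) ∧
      (∀ e ∈ D, ∀ v : Fin N, v ∈ e → v ∈ S) := by
  simp [matchOn]

lemma sum_matchOn (N : ℕ) (w : ℝ) (S : Finset (Fin N)) :
    ∑ D ∈ matchOn N S, w ^ D.card = mdAux S.card w := by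
  classical
  induction S using Finset.strongInduction with
  | _ S ih =>
  by_cases h1 : S.card ≤ 1
  · have hM : matchOn N S = {∅} := by
      ext D
      simp only [Finset.mem_singleton, mem_matchOn]
      constructor
      · rintro ⟨hdiag, -, hsupp⟩
        rw [Finset.eq_empty_iff_forall_notMem]
        intro e he
        revert he
        induction e using Sym2.ind with
        | _ x y =>
          intro he
          have hxy : x ≠ y := by
            intro h; exact hdiag _ he (by simp [h])
          have hx : x ∈ S := hsupp _ he x (by simp)
          have hy : y ∈ S := hsupp _ he y (by simp)
          have : 1 < S.card := Finset.one_lt_card.mpr ⟨x, hx, y, hy, hxy⟩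
          omega
      · rintro rfl
        refine ⟨by simp, by simp, by simp⟩
    rw [hM]
    rcases Nat.le_one_iff_eq_zero_or_eq_one.mp h1 with h | h <;>
      simp [h, mdAux]
  · push_neg at h1
    obtain ⟨n, hn⟩ : ∃ n, S.card = n + 2 := ⟨S.card - 2, by omega⟩
    have hSne : S.Nonempty := Finset.card_pos.mp (by omega)
    obtain ⟨v, hv⟩ := hSne
    set S' := S.erase v with hS'
    have hS'card : S'.card = n + 1 := by
      rw [hS', Finset.card_erase_of_mem hv]; omega
    have hsplit := Finset.sum_filter_add_sum_filter_not (matchOn N S)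
      (fun D => ∀ e ∈ D, v ∉ e) (fun D => w ^ D.card)
    -- uncovered part
    have claim1 : (matchOn N S).filter (fun D => ∀ e ∈ D, v ∉ e) = matchOn N S' := by
      ext D
      simp only [Finset.mem_filter, mem_matchOn]
      constructor
      · rintro ⟨⟨hdiag, hdisj, hsupp⟩, hnv⟩
        exact ⟨hdiag, hdisj, fun e he u hu =>
          Finset.mem_erase.mpr ⟨fun h => hnv e he (h ▸ hu), hsupp e he u hu⟩⟩
      · rintro ⟨hdiag, hdisj, hsupp⟩
        refine ⟨⟨hdiag, hdisj, fun e he u hu => Finset.mem_of_mem_erase (hsupp e he u hu)⟩,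
          fun e he hvmem => ?_⟩
        exact (Finset.mem_erase.mp (hsupp e he v hvmem)).1 rfl
    have havoid : ∀ u : Fin N, ∀ D' ∈ matchOn N (S'.erase u), ∀ e ∈ D', v ∉ e ∧ u ∉ e := by
      intro u D' hD' e he
      obtain ⟨-, -, hsupp⟩ := mem_matchOn.mp hD'
      constructor
      · intro hvmem
        have h2 := Finset.mem_of_mem_erase (hsupp e he v hvmem)
        exact (Finset.mem_erase.mp h2).1 rfl
      · intro humem
        exact (Finset.mem_erase.mp (hsupp e he u humem)).1 rfl
    -- covered part
    have claim2 : (matchOn N S).filter (fun D => ¬ ∀ e ∈ D, v ∉ e)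
        = (S'.sigma (fun u => matchOn N (S'.erase u))).image
            (fun p => insert s(v, p.1) p.2) := by
      ext D
      simp only [Finset.mem_filter, Finset.mem_image]
      constructor
      · rintro ⟨hD, hcov⟩
        push_neg at hcov
        obtain ⟨e, he, hve⟩ := hcov
        obtain ⟨hdiag, hdisj, hsupp⟩ := mem_matchOn.mp hD
        set u := Sym2.Mem.other hve with hu
        have hspec : s(v, u) = e := Sym2.other_spec hve
        have humem : u ∈ e := Sym2.other_mem hve
        have hune : u ≠ v := Sym2.other_ne (hdiag e he) hve
        have huS : u ∈ S := hsupp e he u humem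
        refine ⟨⟨u, D.erase e⟩, Finset.mem_sigma.mpr
          ⟨Finset.mem_erase.mpr ⟨hune, huS⟩, ?_⟩, ?_⟩
        · rw [mem_matchOn]
          refine ⟨fun f hf => hdiag f (Finset.mem_of_mem_erase hf),
            fun f hf g hg => hdisj f (Finset.mem_of_mem_erase hf) g
              (Finset.mem_of_mem_erase hg),
            fun f hf x hx => ?_⟩
          have hfD : f ∈ D := Finset.mem_of_mem_erase hf
          have hfe : f ≠ e := Finset.ne_of_mem_erase hf
          have hxS : x ∈ S := hsupp f hfD x hx
          have hxv : x ≠ v := fun h => hdisj f hfD e he hfe x ⟨hx, h ▸ hve⟩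
          have hxu : x ≠ u := fun h => hdisj f hfD e he hfe x ⟨hx, h ▸ humem⟩
          exact Finset.mem_erase.mpr ⟨hxu, Finset.mem_erase.mpr ⟨hxv, hxS⟩⟩
        · show insert s(v,u) (D.erase e) = D
          rw [hspec, Finset.insert_erase he]
      · rintro ⟨⟨u, D'⟩, hp, rfl⟩
        obtain ⟨hu, hD'⟩ := Finset.mem_sigma.mp hp
        obtain ⟨hdiag, hdisj, hsupp⟩ := mem_matchOn.mp hD'
        obtain ⟨hune, huS⟩ := Finset.mem_erase.mp hu
        have hav := havoid u D' hD'
        constructor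
        · rw [mem_matchOn]
          refine ⟨?_, ?_, ?_⟩
          · intro e he
            rcases Finset.mem_insert.mp he with rfl | he'
            · rw [Sym2.mk_isDiag_iff]
              exact fun h => hune h.symm
            · exact hdiag e he'
          · rintro e he f hf hef x ⟨hxe, hxf⟩
            rcases Finset.mem_insert.mp he with rfl | he' <;>
              rcases Finset.mem_insert.mp hf with rfl | hf'
            · exact hef rfl
            · rcases Sym2.mem_iff.mp hxe with rfl | rfl
              · exact (hav f hf').1 hxf
              · exact (hav f hf').2 hxf
            · rcases Sym2.mem_iff.mp hxf with rfl | rfl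
              · exact (hav e he').1 hxe
              · exact (hav e he').2 hxe
            · exact hdisj e he' f hf' hef x ⟨hxe, hxf⟩
          · intro e he x hx
            rcases Finset.mem_insert.mp he with rfl | he'
            · rcases Sym2.mem_iff.mp hx with rfl | rfl
              · exact hv
              · exact huS
            · exact Finset.mem_of_mem_erase (Finset.mem_of_mem_erase (hsupp e he' x hx))
        · push_neg
          exact ⟨s(v,u), Finset.mem_insert_self _ _, Sym2.mem_mk_left _ _⟩
    have hinj : ∀ p ∈ S'.sigma (fun u => matchOn N (S'.erase u)),
        ∀ q ∈ S'.sigma (fun u => matchOn N (S'.erase u)),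
        (fun p : (_ : Fin N) × Finset (Sym2 (Fin N)) => insert s(v, p.1) p.2) p =
        (fun p : (_ : Fin N) × Finset (Sym2 (Fin N)) => insert s(v, p.1) p.2) q → p = q := by
      rintro ⟨u1, D1⟩ hp ⟨u2, D2⟩ hq heq
      simp only at heq
      obtain ⟨hu1, hD1⟩ := Finset.mem_sigma.mp hp
      obtain ⟨hu2, hD2⟩ := Finset.mem_sigma.mp hq
      have hni1 : s(v, u1) ∉ D1 := fun h =>
        (havoid u1 D1 hD1 _ h).1 (Sym2.mem_mk_left _ _)
      have hni2 : s(v, u2) ∉ D2 := fun h =>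
        (havoid u2 D2 hD2 _ h).1 (Sym2.mem_mk_left _ _)
      have hu12 : u1 = u2 := by
        have h1 : s(v, u1) ∈ insert s(v, u2) D2 := heq ▸ Finset.mem_insert_self _ _
        rcases Finset.mem_insert.mp h1 with h | h
        · exact Sym2.congr_right.mp h
        · exact absurd ((havoid u2 D2 hD2 _ h).1 (Sym2.mem_mk_left _ _)) not_false
      subst hu12
      have hDD : D1 = D2 := by
        have h2 := congrArg (fun T => Finset.erase T s(v, u1)) heq
        simpa [Finset.erase_insert hni1, Finset.erase_insert hni2] using h2
      rw [hDD]
    have hcard : ∀ p ∈ S'.sigma (fun u => matchOn N (S'.erase u)),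
        (insert s(v, p.1) p.2).card = p.2.card + 1 := by
      intro p hp
      obtain ⟨hpu, hpD⟩ := Finset.mem_sigma.mp hp
      rw [Finset.card_insert_of_notMem]
      intro hmem
      exact (havoid p.1 p.2 hpD _ hmem).1 (Sym2.mem_mk_left _ _)
    rw [← hsplit, claim1, claim2, Finset.sum_image hinj]
    have hsum2 : ∑ p ∈ S'.sigma (fun u => matchOn N (S'.erase u)),
        w ^ (insert s(v, p.1) p.2).card = (↑(n+1) : ℝ) * (w * mdAux n w) := by
      rw [Finset.sum_congr rfl (fun p hp => by rw [hcard p hp])]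
      rw [Finset.sum_sigma]
      have : ∀ u ∈ S', ∑ D' ∈ matchOn N (S'.erase u), w ^ (D'.card + 1)
          = w * mdAux n w := by
        intro u hu
        have hss : S'.erase u ⊂ S :=
          Finset.ssubset_of_subset_of_ssubset (Finset.erase_subset _ _)
            (Finset.erase_ssubset hv)
        have hcard' : (S'.erase u).card = n := by
          rw [Finset.card_erase_of_mem hu, hS'card]
          omega
        have := ih _ hss
        rw [hcard'] at this
        rw [← this, Finset.mul_sum]
        exact Finset.sum_congr rfl (fun D _ => by rw [pow_succ]; ring)
      rw [Finset.sum_congr rfl this, Finset.sum_const, hS'card, nsmul_eq_mul]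
    rw [hsum2, ih S' (Finset.erase_ssubset hv), hS'card, hn]
    show mdAux (n+1) w + _ = mdAux (n+1) w + ((n:ℝ)+1) * w * mdAux n w
    push_cast
    ring

end
end AuxProofs

lemma dimerConfigs_eq_matchOn (N : ℕ) : dimerConfigs N = matchOn N Finset.univ := by
  classical
  ext D
  simp [dimerConfigs, matchOn, IsDimerConfig]

lemma Z0_eq_mdAux (N : ℕ) (hN : 1 ≤ N) (a : ℝ) :
    Z0 N a = Real.exp (a * N) * mdAux N (Real.exp (-(2*a)) / N) := by
  have key := sum_matchOn N (Real.exp (-(2*a)) / N) Finset.univ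
  rw [Finset.card_univ, Fintype.card_fin] at key
  rw [Z0, dimerConfigs_eq_matchOn, ← key, Finset.mul_sum]
  apply Finset.sum_congr rfl
  intro D _
  have hNne : (N:ℝ) ≠ 0 := by
    have : (0:ℝ) < N := by exact_mod_cast hN
    exact this.ne'
  rw [monomerCount]
  have h1 : a * ((N:ℝ) - 2*D.card) = a*N + (D.card : ℕ) * (-(2*a)) := by push_cast; ring
  rw [h1, Real.exp_add, Real.exp_nat_mul, zpow_neg, zpow_natCast, div_pow]
  field_simp

/-- Gaussian representation of the pure hard-core partition
function. -/
theorem hardcore_gaussian_representation (N : ℕ) (hN : 1 ≤ N) (a : ℝ) :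
    Z0 N a = Real.sqrt ((N : ℝ) / (2 * π)) *
      ∫ x : ℝ, ((x + Real.exp a) * Real.exp (-x^2/2)) ^ N := by
  rw [Z0_eq_mdAux N hN a, rhs_eq N hN a]

end
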